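/- Deterministic chain example showing per-step concentrability is loose: in the MDP with states s₀,…,s_L, one action, deterministic transitions s_l → s_{l+1} for l < L and s_L absorbing, initial state s₀, and data distribution μ = d_π for the unique policy π, the occupancy-based coefficient satisfies ‖w_π‖_∞ = 1, while the per-step coefficients C_t := ‖d_{π,t}/μ‖_∞ satisfy C_t = 1/((1-γ)γ^t) for t < L and C_t = 1/γ^L for t ≥ L; hence if γ^L ≤ 1-γ then C_t ≥ 1/(1-γ) for all t, so any convex combination Σ_t β(t) C_t (with β(t) ≥ 0, Σβ(t)=1) is at least 1/(1-γ). -/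

import Mathlib

open scoped BigOperators

/-- Time-`t` state-action marginal distribution of a policy in a finite MDP. -/
noncomputable def marg {S A : Type*} [Fintype S] [Fintype A]
    (d0 : S → ℝ) (P : S → A → S → ℝ) (pol : S → A → ℝ) : ℕ → S → A → ℝ
  | 0 => fun s a => d0 s * pol s a
  | (t + 1) => fun s' a' => (∑ s, ∑ a, marg d0 P pol t s a * P s a s') * pol s' a'

/-- Normalized discounted state-action occupancy `d_π(s,a)`. -/
noncomputable def occ {S A : Type*} [Fintype S] [Fintype A]
    (γ : ℝ) (d0 : S → ℝ) (P : S → A → S → ℝ) (pol : S → A → ℝ) (s : S) (a : A) : ℝ :=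
  (1 - γ) * ∑' t : ℕ, γ ^ t * marg d0 P pol t s a

/-- Expected discounted return `J(π)`. -/
noncomputable def Jret {S A : Type*} [Fintype S] [Fintype A]
    (γ : ℝ) (d0 : S → ℝ) (P : S → A → S → ℝ) (R : S → A → ℝ) (pol : S → A → ℝ) : ℝ :=
  ∑' t : ℕ, γ ^ t * ∑ s, ∑ a, marg d0 P pol t s a * R s a

/-- Bellman optimality operator `(T Q)(s,a) = R(s,a) + γ Σ_{s'} P(s'|s,a) max_{a'} Q(s',a')`. -/
noncomputable def bellmanT {S A : Type*} [Fintype S] [Fintype A] [Nonempty A]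
    (γ : ℝ) (P : S → A → S → ℝ) (R : S → A → ℝ) (Q : S → A → ℝ) (s : S) (a : A) : ℝ :=
  R s a + γ * ∑ s', P s a s' * (⨆ a', Q s' a')

/-- A deterministic policy viewed as a stochastic policy. -/
noncomputable def detPol {S A : Type*} [DecidableEq A] (g : S → A) : S → A → ℝ :=
  fun s a => if a = g s then 1 else 0

lemma marg_eq (L : ℕ) (t : ℕ) (s : Fin (L+1)) :
    marg (fun s => if s = (0:Fin (L+1)) then (1:ℝ) else 0)
      (fun (l : Fin (L+1)) (_ : Unit) (l' : Fin (L+1)) =>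
        if (l':ℕ) = min ((l:ℕ)+1) L then (1:ℝ) else 0)
      (fun _ _ => 1) t s () = if (s:ℕ) = min t L then 1 else 0 := by
  induction t generalizing s with
  | zero =>
      simp only [marg, Fin.ext_iff, Fin.val_zero, Nat.zero_min, mul_one]
  | succ t ih =>
      have hm : min t L < L + 1 := by omega
      simp only [marg, ih, Finset.univ_unique, Finset.sum_singleton, mul_one]
      rw [Finset.sum_eq_single (⟨min t L, hm⟩ : Fin (L+1))]
      · simp only [Fin.ext_iff]
        have h1 : min (min t L + 1) L = min (t+1) L := by omega
        simp [h1]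
      · intro b _ hb
        have : ¬ ((b:ℕ) = min t L) := by
          intro h; exact hb (Fin.ext h)
        simp [this]
      · intro h; exact absurd (Finset.mem_univ _) h

lemma occ_eq (L : ℕ) (γ : ℝ) (hγ0 : 0 < γ) (hγ1 : γ < 1) (s : Fin (L+1)) :
    occ γ (fun s => if s = (0:Fin (L+1)) then (1:ℝ) else 0)
      (fun (l : Fin (L+1)) (_ : Unit) (l' : Fin (L+1)) =>
        if (l':ℕ) = min ((l:ℕ)+1) L then (1:ℝ) else 0)
      (fun _ _ => 1) s ()
    = if (s:ℕ) = L then γ^L else (1-γ)*γ^((s:ℕ)) := by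
  unfold occ
  simp only [marg_eq]
  set f : ℕ → ℝ := fun t => γ ^ t * if (s:ℕ) = min t L then 1 else 0 with hf
  by_cases hs : (s:ℕ) = L
  · rw [if_pos hs]
    have hsum : Summable f := by
      apply Summable.of_nonneg_of_le (fun t => ?_) (fun t => ?_)
        (summable_geometric_of_lt_one hγ0.le hγ1)
      · positivity
      · simp only [hf]
        split <;> simp [le_of_lt (pow_pos hγ0 _), pow_nonneg hγ0.le]
    rw [← Summable.sum_add_tsum_nat_add L hsum]
    have h1 : ∑ i ∈ Finset.range L, f i = 0 := by
      apply Finset.sum_eq_zero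
      intro i hi
      simp only [Finset.mem_range] at hi
      have : ¬ ((s:ℕ) = min i L) := by omega
      simp [hf, this]
    have h2 : ∀ i, f (i + L) = γ ^ L * γ ^ i := by
      intro i
      have : (s:ℕ) = min (i + L) L := by omega
      simp [hf, this, pow_add, mul_comm]
    rw [h1, zero_add]
    simp only [h2]
    rw [tsum_mul_left, tsum_geometric_of_lt_one hγ0.le hγ1]
    rw [mul_comm, mul_assoc, inv_mul_cancel₀ (by linarith : (1:ℝ)-γ ≠ 0), mul_one]
  · have hsL : (s:ℕ) < L := by omega
    rw [if_neg hs]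
    rw [tsum_eq_single ((s:ℕ))]
    · have : (s:ℕ) = min (s:ℕ) L := by omega
      simp [hf, ← this]
    · intro t ht
      have : ¬ ((s:ℕ) = min t L) := by omega
      simp [hf, this]

/-- Deterministic chain example: occupancy-based concentrability is `1`, whereas every
    per-step coefficient `C_t` is at least `1/(1-γ)` once `γ^L ≤ 1-γ`, so every convex
    combination of the `C_t` is at least `1/(1-γ)`. -/
theorem stmt9 (L : ℕ) (γ : ℝ) (hγ0 : 0 < γ) (hγ1 : γ < 1)
    (d0 : Fin (L + 1) → ℝ) (hd0 : d0 = fun s => if s = (0 : Fin (L + 1)) then 1 else 0)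
    (P : Fin (L + 1) → Unit → Fin (L + 1) → ℝ)
    (hP : P = fun (l : Fin (L + 1)) (_ : Unit) (l' : Fin (L + 1)) =>
      if (l' : ℕ) = min ((l : ℕ) + 1) L then (1 : ℝ) else 0)
    (pol : Fin (L + 1) → Unit → ℝ) (hpol : pol = fun _ _ => 1)
    (μ : Fin (L + 1) → ℝ) (hμ : μ = fun s => occ γ d0 P pol s ())
    (C : ℕ → ℝ) (hC : C = fun t => ⨆ s, marg d0 P pol t s () / μ s) :
    (⨆ s, |occ γ d0 P pol s () / μ s|) = 1
    ∧ (∀ t < L, C t = 1 / ((1 - γ) * γ ^ t))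
    ∧ (∀ t, L ≤ t → C t = 1 / γ ^ L)
    ∧ (γ ^ L ≤ 1 - γ →
        ∀ β : ℕ → ℝ, (∀ t, 0 ≤ β t) → (∑' t, β t) = 1 →
          1 / (1 - γ) ≤ ∑' t, β t * C t) := by
  subst hd0 hP hpol
  have h1γ : 0 < 1 - γ := by linarith
  have hμpos : ∀ s : Fin (L+1), 0 < μ s := by
    intro s
    rw [hμ]
    simp only
    rw [occ_eq L γ hγ0 hγ1 s]
    split
    · exact pow_pos hγ0 _
    · positivity
  -- general formula for the per-step coefficient
  have hCgen : ∀ t : ℕ,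
      (⨆ s, marg (fun s => if s = (0:Fin (L+1)) then (1:ℝ) else 0)
        (fun (l : Fin (L+1)) (_ : Unit) (l' : Fin (L+1)) =>
          if (l':ℕ) = min ((l:ℕ)+1) L then (1:ℝ) else 0)
        (fun _ _ => 1) t s () / μ s)
      = 1 / (if min t L = L then γ^L else (1-γ)*γ^(min t L)) := by
    intro t
    have hmlt : min t L < L + 1 := by omega
    set m : Fin (L+1) := ⟨min t L, hmlt⟩ with hm
    have hμm : μ m = if min t L = L then γ^L else (1-γ)*γ^(min t L) := by
      rw [hμ]; simp only; rw [occ_eq L γ hγ0 hγ1 m]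
    have hvpos : 0 < 1 / μ m := one_div_pos.mpr (hμpos m)
    apply le_antisymm
    · apply ciSup_le
      intro s
      rw [marg_eq]
      by_cases hcs : (s:ℕ) = min t L
      · have : s = m := Fin.ext hcs
        rw [if_pos hcs, this, ← hμm]
      · rw [if_neg hcs, zero_div, ← hμm]
        exact hvpos.le
    · have := le_ciSup (f := fun s => marg (fun s => if s = (0:Fin (L+1)) then (1:ℝ) else 0)
        (fun (l : Fin (L+1)) (_ : Unit) (l' : Fin (L+1)) =>
          if (l':ℕ) = min ((l:ℕ)+1) L then (1:ℝ) else 0)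
        (fun _ _ => 1) t s () / μ s) (Set.Finite.bddAbove (Set.finite_range _)) m
      rw [marg_eq] at this
      simp only [hm, if_pos rfl] at this
      rw [← hμm]
      exact this
  have hCt1 : ∀ t < L, C t = 1 / ((1 - γ) * γ ^ t) := by
    intro t ht
    simp only [hC]
    rw [hCgen t]
    have h1 : min t L = t := by omega
    have h2 : ¬ (min t L = L) := by omega
    rw [if_neg h2, h1]
  have hCt2 : ∀ t, L ≤ t → C t = 1 / γ ^ L := by
    intro t ht
    simp only [hC]
    rw [hCgen t]
    have h1 : min t L = L := by omega
    rw [if_pos h1]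
  refine ⟨?_, hCt1, hCt2, ?_⟩
  · have h1 : ∀ s : Fin (L+1),
        |occ γ (fun s => if s = (0:Fin (L+1)) then (1:ℝ) else 0)
          (fun (l : Fin (L+1)) (_ : Unit) (l' : Fin (L+1)) =>
            if (l':ℕ) = min ((l:ℕ)+1) L then (1:ℝ) else 0)
          (fun _ _ => 1) s () / μ s| = 1 := by
      intro s
      have : occ γ (fun s => if s = (0:Fin (L+1)) then (1:ℝ) else 0)
          (fun (l : Fin (L+1)) (_ : Unit) (l' : Fin (L+1)) =>
            if (l':ℕ) = min ((l:ℕ)+1) L then (1:ℝ) else 0)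
          (fun _ _ => 1) s () = μ s := by rw [hμ]
      rw [this, div_self (ne_of_gt (hμpos s)), abs_one]
    calc (⨆ s, |occ γ _ _ _ s () / μ s|) = ⨆ _ : Fin (L+1), (1:ℝ) := by
            simp only [h1]
      _ = 1 := ciSup_const
  · intro hγL β hβ hβ1
    have hβsum : Summable β := by
      by_contra h
      rw [tsum_eq_zero_of_not_summable h] at hβ1
      norm_num at hβ1
    have hClb : ∀ t, 1 / (1 - γ) ≤ C t := by
      intro t
      by_cases ht : t < L
      · rw [hCt1 t ht]
        apply one_div_le_one_div_of_le
        · positivity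
        · nlinarith [pow_le_one₀ hγ0.le hγ1.le (n := t), pow_pos hγ0 t]
      · rw [hCt2 t (by omega)]
        apply one_div_le_one_div_of_le
        · positivity
        · exact hγL
    have hCub : ∀ t, C t ≤ 1 / ((1 - γ) * γ ^ L) := by
      intro t
      by_cases ht : t < L
      · rw [hCt1 t ht]
        apply one_div_le_one_div_of_le
        · positivity
        · have : γ ^ L ≤ γ ^ t := pow_le_pow_of_le_one hγ0.le hγ1.le (by omega)
          nlinarith
      · rw [hCt2 t (by omega)]
        apply one_div_le_one_div_of_le
        · positivity
        · nlinarith [pow_pos hγ0 L, pow_le_one₀ hγ0.le hγ1.le (n := L)]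
    have hsum2 : Summable (fun t => β t * C t) :=
      Summable.of_nonneg_of_le
        (fun t => mul_nonneg (hβ t) (le_trans (by positivity) (hClb t)))
        (fun t => mul_le_mul_of_nonneg_left (hCub t) (hβ t))
        (hβsum.mul_right _)
    calc 1 / (1 - γ) = ∑' t, β t * (1 / (1 - γ)) := by
          rw [tsum_mul_right, hβ1, one_mul]
      _ ≤ ∑' t, β t * C t :=
          Summable.tsum_le_tsum (fun t => mul_le_mul_of_nonneg_left (hClb t) (hβ t))
            (hβsum.mul_right _) hsum2
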